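/- If A is a two-sided ideal of a (possibly non-unital) ring L such that A has local units (for every a ∈ A there exists an idempotent u ∈ A with ua = a = au), then for every two-sided ideal B of L one has AB = A ∩ B and BA = B ∩ A; in particular A² = A and AB = BA. -/
import Mathlib


/-- The product of two two-sided ideals: the smallest two-sided ideal
containing all products `a * b` with `a ∈ A`, `b ∈ B`. -/
def tsiMul {L : Type*} [NonUnitalRing L] (A B : TwoSidedIdeal L) : TwoSidedIdeal L :=
  sInf {I : TwoSidedIdeal L | ∀ a ∈ A, ∀ b ∈ B, a * b ∈ I}

/-- A two-sided ideal `A` has local units if every `a ∈ A` admits an idempotent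
`u ∈ A` with `u * a = a = a * u`. -/
def HasLocalUnits {L : Type*} [NonUnitalRing L] (A : TwoSidedIdeal L) : Prop :=
  ∀ a ∈ A, ∃ u ∈ A, u * u = u ∧ u * a = a ∧ a * u = a

lemma tsiMul_le_inf {L : Type*} [NonUnitalRing L] (A B : TwoSidedIdeal L) :
    tsiMul A B ≤ A ⊓ B :=
  sInf_le fun a ha b hb => ⟨A.mul_mem_right a b ha, B.mul_mem_left a b hb⟩

lemma mul_mem_tsiMul {L : Type*} [NonUnitalRing L] (A B : TwoSidedIdeal L)
    {a b : L} (ha : a ∈ A) (hb : b ∈ B) : a * b ∈ tsiMul A B :=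
  (TwoSidedIdeal.mem_sInf L).mpr fun _ hI => hI a ha b hb

theorem graded_ideal_property {L : Type*} [NonUnitalRing L]
    (A : TwoSidedIdeal L) (hA : HasLocalUnits A) (B : TwoSidedIdeal L) :
    tsiMul A B = A ⊓ B ∧ tsiMul B A = B ⊓ A ∧
      tsiMul A A = A ∧ tsiMul A B = tsiMul B A := by
  have h1 : tsiMul A B = A ⊓ B := by
    refine le_antisymm (tsiMul_le_inf A B) ?_
    rintro x ⟨hxA, hxB⟩
    obtain ⟨u, huA, -, hux, -⟩ := hA x hxA
    exact hux ▸ mul_mem_tsiMul A B huA hxB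
  have h2 : tsiMul B A = B ⊓ A := by
    refine le_antisymm (tsiMul_le_inf B A) ?_
    rintro x ⟨hxB, hxA⟩
    obtain ⟨u, huA, -, -, hxu⟩ := hA x hxA
    exact hxu ▸ mul_mem_tsiMul B A hxB huA
  have h3 : tsiMul A A = A := by
    refine le_antisymm ((tsiMul_le_inf A A).trans inf_le_left) fun x hx => ?_
    obtain ⟨u, huA, -, hux, -⟩ := hA x hx
    exact hux ▸ mul_mem_tsiMul A A huA hx
  exact ⟨h1, h2, h3, by rw [h1, h2, inf_comm]⟩
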